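/- Let grouped sign-bit quantization partition {1, ..., D} into M₀ nonempty groups I_1, ..., I_{M₀}, compressing each subvector g_m = (g_j)_{j ∈ I_m} to sign(g_m)·‖g_m‖₁/|I_m| and concatenating. Then for every g ∈ R^D, ‖C(g) − g‖² ≤ δ‖g‖² with δ = 1 − min_{m ∈ {1,...,M₀}} 1/|I_m|. -/

import Mathlib

private lemma rsign_mul_self (x : ℝ) : Real.sign x * x = |x| := by
  rcases lt_trichotomy x 0 with h | h | h
  · rw [Real.sign_of_neg h, abs_of_neg h]; ring
  · simp [h]
  · rw [Real.sign_of_pos h, abs_of_pos h]; ring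

private lemma rsign_sq_le_one (x : ℝ) : (Real.sign x) ^ 2 ≤ 1 := by
  rcases lt_trichotomy x 0 with h | h | h
  · rw [Real.sign_of_neg h]; norm_num
  · simp [h]
  · rw [Real.sign_of_pos h]; norm_num

private lemma group_bound {ι : Type*} (s : Finset ι) (hs : 0 < s.card) (g : ι → ℝ) :
    ∑ j ∈ s, (Real.sign (g j) * (∑ k ∈ s, |g k|) / (s.card : ℝ) - g j) ^ 2
      ≤ (1 - 1 / (s.card : ℝ)) * ∑ j ∈ s, (g j) ^ 2 := by
  set n : ℝ := (s.card : ℝ) with hn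
  have hn0 : (0:ℝ) < n := by rw [hn]; exact_mod_cast hs
  set S : ℝ := ∑ k ∈ s, |g k| with hS
  have hSsq : ∑ j ∈ s, (g j) ^ 2 ≤ S ^ 2 := by
    calc ∑ j ∈ s, (g j) ^ 2 = ∑ j ∈ s, |g j| ^ 2 := by simp [sq_abs]
      _ ≤ S ^ 2 := Finset.sum_sq_le_sq_sum_of_nonneg (fun i _ => abs_nonneg _)
  have key : ∑ j ∈ s, (Real.sign (g j) * S / n - g j) ^ 2
      ≤ n * (S / n) ^ 2 - 2 * (S / n) * S + ∑ j ∈ s, (g j) ^ 2 := by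
    have h1 : ∀ j ∈ s, (Real.sign (g j) * S / n - g j) ^ 2
        ≤ (S / n) ^ 2 - 2 * (S / n) * |g j| + (g j) ^ 2 := by
      intro j _
      have hs1 : Real.sign (g j) * g j = |g j| := rsign_mul_self _
      have hs2 : (Real.sign (g j)) ^ 2 ≤ 1 := rsign_sq_le_one _
      have h0 : 0 ≤ (S / n) ^ 2 := sq_nonneg _
      have : (Real.sign (g j) * S / n - g j) ^ 2
          = (Real.sign (g j)) ^ 2 * (S / n) ^ 2
            - 2 * (S / n) * (Real.sign (g j) * g j) + (g j) ^ 2 := by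
        field_simp; ring
      rw [this, hs1]
      nlinarith
    calc ∑ j ∈ s, (Real.sign (g j) * S / n - g j) ^ 2
        ≤ ∑ j ∈ s, ((S / n) ^ 2 - 2 * (S / n) * |g j| + (g j) ^ 2) :=
          Finset.sum_le_sum h1
      _ = n * (S / n) ^ 2 - 2 * (S / n) * S + ∑ j ∈ s, (g j) ^ 2 := by
          rw [Finset.sum_add_distrib, Finset.sum_sub_distrib, ← Finset.mul_sum,
            Finset.sum_const, nsmul_eq_mul, ← hS, ← hn]
  have hdiv : n * (S / n) ^ 2 - 2 * (S / n) * S = -(S ^ 2 / n) := by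
    field_simp; ring
  rw [hdiv] at key
  have hfrac : (1 / n) * (∑ j ∈ s, (g j) ^ 2) ≤ (1 / n) * S ^ 2 :=
    mul_le_mul_of_nonneg_left hSsq (by positivity)
  have : S ^ 2 / n = (1 / n) * S ^ 2 := by ring
  nlinarith [key, hfrac]

/-- Grouped sign-bit quantization: with group assignment `P : Fin D → Fin M₀`
(every group nonempty), the compressed vector has `j`-th component
`sign(g j) ⬝ (∑_{k : P k = P j} |g k|) / |{k : P k = P j}|`, and
`‖C(g) − g‖² ≤ (1 − min_m 1/|I_m|)‖g‖²`. -/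
theorem grouped_signbit_contraction (D M₀ : ℕ) [NeZero M₀] (hD : 0 < D)
    (P : Fin D → Fin M₀) (hsurj : ∀ m, ∃ j, P j = m)
    (g : EuclideanSpace ℝ (Fin D)) :
    ‖(show EuclideanSpace ℝ (Fin D) from
        WithLp.toLp 2 (fun j => Real.sign (g j)
          * (∑ k ∈ Finset.univ.filter (fun k => P k = P j), |g k|)
          / ((Finset.univ.filter (fun k => P k = P j)).card : ℝ))) - g‖ ^ 2
      ≤ (1 - ⨅ m : Fin M₀,
            1 / (((Finset.univ.filter (fun k => P k = m)).card : ℝ))) * ‖g‖ ^ 2 := by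
  classical
  set C : EuclideanSpace ℝ (Fin D) := WithLp.toLp 2 (fun j => Real.sign (g j)
      * (∑ k ∈ Finset.univ.filter (fun k => P k = P j), |g k|)
      / ((Finset.univ.filter (fun k => P k = P j)).card : ℝ)) with hC
  have hcard : ∀ m : Fin M₀, 0 < (Finset.univ.filter (fun k => P k = m)).card := by
    intro m
    obtain ⟨j, hj⟩ := hsurj m
    exact Finset.card_pos.mpr ⟨j, by simp [hj]⟩
  -- infimum facts
  have hbdd : BddBelow (Set.range fun m : Fin M₀ =>
      1 / (((Finset.univ.filter (fun k => P k = m)).card : ℝ))) :=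
    (Set.finite_range _).bddBelow
  have hinf_le : ∀ m : Fin M₀,
      (⨅ m' : Fin M₀, 1 / (((Finset.univ.filter (fun k => P k = m')).card : ℝ)))
        ≤ 1 / (((Finset.univ.filter (fun k => P k = m)).card : ℝ)) :=
    fun m => ciInf_le hbdd m
  -- norms as sums of squares
  have norm_sq : ∀ x : EuclideanSpace ℝ (Fin D), ‖x‖ ^ 2 = ∑ j, (x j) ^ 2 := by
    intro x
    rw [EuclideanSpace.norm_eq, Real.sq_sqrt (by positivity)]
    simp [Real.norm_eq_abs, sq_abs]
  have hsub : ∀ j, (C - g) j = C j - g j := fun j => rfl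
  rw [norm_sq, norm_sq]
  simp only [hsub]
  -- fiberwise decomposition
  have hfib : ∀ f : Fin D → ℝ, ∑ j, f j
      = ∑ m : Fin M₀, ∑ j ∈ Finset.univ.filter (fun k => P k = m), f j := by
    intro f
    exact (Finset.sum_fiberwise_of_maps_to (fun j _ => Finset.mem_univ (P j)) f).symm
  rw [hfib fun j => (C j - g j) ^ 2, hfib fun j => (g j) ^ 2, Finset.mul_sum]
  apply Finset.sum_le_sum
  intro m _
  set s : Finset (Fin D) := Finset.univ.filter (fun k => P k = m) with hs
  have hterm : ∀ j ∈ s, (C j - g j) ^ 2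
      = (Real.sign (g j) * (∑ k ∈ s, |g k|) / (s.card : ℝ) - g j) ^ 2 := by
    intro j hj
    have hPj : P j = m := by simpa [hs] using hj
    simp [hC, hs, hPj]
  rw [Finset.sum_congr rfl hterm]
  calc ∑ j ∈ s, (Real.sign (g j) * (∑ k ∈ s, |g k|) / (s.card : ℝ) - g j) ^ 2
      ≤ (1 - 1 / (s.card : ℝ)) * ∑ j ∈ s, (g j) ^ 2 := group_bound s (hcard m) g
    _ ≤ (1 - ⨅ m' : Fin M₀, 1 / (((Finset.univ.filter (fun k => P k = m')).card : ℝ)))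
          * ∑ j ∈ s, (g j) ^ 2 := by
        apply mul_le_mul_of_nonneg_right _ (Finset.sum_nonneg fun _ _ => sq_nonneg _)
        have := hinf_le m
        linarith
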